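/- Under the generative distribution D^(i) for a tree circuit with gates in {AND, OR, NAND, NOR} (as defined by uniform sampling of consistent patterns, starting from a uniform ±1 label), for every coordinate j: |E[x_j y]| = |P(x_j=1|y=1) − P(x_j=1|y=−1)| = (2/3)^i, and in particular |E[x_j y]| − E[y] ≥ (2/3)^d = n^{log₂(2/3)} for every layer i ≤ d, where n = 2^d. -/

import Mathlib

/-- The allowed gate types for the generative model: AND, OR, NAND, NOR. -/
inductive BGate | and | or | nand | nor

/-- Evaluation of a gate on ±1-encoded booleans (1 = true, −1 = false). -/
def BGate.eval : BGate → ℤ → ℤ → ℤ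
  | .and,  a, b => if a = 1 ∧ b = 1 then 1 else -1
  | .or,   a, b => if a = 1 ∨ b = 1 then 1 else -1
  | .nand, a, b => if a = 1 ∧ b = 1 then -1 else 1
  | .nor,  a, b => if a = 1 ∨ b = 1 then -1 else 1

/-- ±1 encoding of a boolean. -/
def pm (b : Bool) : ℤ := if b then 1 else -1

/-- Number of input patterns in {±1}² on which gate `g` outputs `c`. -/
def BGate.patCount (g : BGate) (c : ℤ) : ℕ :=
  (Finset.univ.filter (fun p : Bool × Bool => g.eval (pm p.1) (pm p.2) = c)).card

/-- The values of the previous (coarser) layer determined by a configuration `x`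
of layer `i+1`: bit `j` is the gate `γ j` applied to the pair `(x_{2j}, x_{2j+1})`. -/
def prevLayer (i : ℕ) (γ : ℕ → BGate) (x : Fin (2^(i+1)) → ℤ) (j : Fin (2^i)) : ℤ :=
  (γ j).eval (x ⟨2*j.1, by have h := j.2; rw [pow_succ]; omega⟩)
             (x ⟨2*j.1+1, by have h := j.2; rw [pow_succ]; omega⟩)

/-- Probability mass function of the generative distribution `D^(i)` on
configurations of layer `i` together with the label: `D^(0)` identifies the
single bit with a uniform ±1 label, and `D^(i+1)` is obtained from `D^(i)` by
replacing each bit `z_j` with a uniformly random pattern in {±1}² among those on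
which gate `γ i j` outputs `z_j`. -/
noncomputable def genMass (γ : ℕ → ℕ → BGate) : (i : ℕ) → (Fin (2^i) → ℤ) → ℤ → ℝ
  | 0 => fun x y => if x ⟨0, by norm_num⟩ = y ∧ (y = 1 ∨ y = -1) then 1/2 else 0
  | (i+1) => fun x y =>
      if ∀ j, x j = 1 ∨ x j = -1 then
        genMass γ i (prevLayer i (γ i) x) y *
          ∏ j : Fin (2^i), ((((γ i j).patCount (prevLayer i (γ i) x j) : ℝ)))⁻¹
      else 0

/-- Probability of an event under the generative distribution `D^(i)`. -/
noncomputable def genPr (γ : ℕ → ℕ → BGate) (i : ℕ)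
    (E : (Fin (2^i) → ℤ) → ℤ → Prop) [∀ x y, Decidable (E x y)] : ℝ :=
  ∑ s : Fin (2^i) → Bool, ∑ b : Bool,
    if E (fun j => pm (s j)) (pm b) then genMass γ i (fun j => pm (s j)) (pm b) else 0

/-- Expectation of `f(x, y)` under the generative distribution `D^(i)`. -/
noncomputable def genE (γ : ℕ → ℕ → BGate) (i : ℕ)
    (f : (Fin (2^i) → ℤ) → ℤ → ℝ) : ℝ :=
  ∑ s : Fin (2^i) → Bool, ∑ b : Bool,
    f (fun j => pm (s j)) (pm b) * genMass γ i (fun j => pm (s j)) (pm b)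

open Finset

lemma pm_one_or (b : Bool) : pm b = 1 ∨ pm b = -1 := by cases b <;> simp [pm]
lemma pm_inj : Function.Injective pm := by intro a b h; cases a <;> cases b <;> simp_all [pm]
lemma eval_pm (g : BGate) (a b : Bool) :
    g.eval (pm a) (pm b) = 1 ∨ g.eval (pm a) (pm b) = -1 := by
  cases g <;> cases a <;> cases b <;> simp [BGate.eval, pm]
lemma patCount_pos (g : BGate) (b : Bool) : 0 < g.patCount (pm b) := by
  cases g <;> cases b <;> decide
noncomputable def condE (g : BGate) (r : ℕ) (c : ℤ) (f : ℤ → ℤ → ℝ) (y : ℤ) : ℝ :=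
  ((g.patCount c : ℝ))⁻¹ *
    ∑ p : Bool × Bool,
      if g.eval (pm p.1) (pm p.2) = c then f (pm (if r = 0 then p.1 else p.2)) y else 0
def pairUp (i : ℕ) : (Fin (2^i) → Bool × Bool) ≃ (Fin (2^(i+1)) → Bool) where
  toFun t k := if k.1 % 2 = 0
    then (t ⟨k.1/2, by have h:= k.2; have h2 : 2^(i+1) = 2^i*2 := pow_succ 2 i; omega⟩).1
    else (t ⟨k.1/2, by have h:= k.2; have h2 : 2^(i+1) = 2^i*2 := pow_succ 2 i; omega⟩).2
  invFun s j := (s ⟨2*j.1, by have := j.2; rw [pow_succ]; omega⟩,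
                 s ⟨2*j.1+1, by have := j.2; rw [pow_succ]; omega⟩)
  left_inv t := by
    funext j
    have h3 : (2*j.1) % 2 = 0 := by omega
    have h4 : (2*j.1+1) % 2 = 1 := by omega
    have h1 : (2*j.1)/2 = j.1 := by omega
    have h2 : (2*j.1+1)/2 = j.1 := by omega
    simp only [h3, h4, if_pos, if_neg, one_ne_zero, ite_true, ite_false]
    apply Prod.ext <;> simp only [h1, h2, Fin.eta]
  right_inv s := by
    funext k
    by_cases hk : k.1 % 2 = 0
    · simp only [hk, ite_true]
      congr 1
      exact Fin.ext (show 2*(k.1/2) = k.1 by omega)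
    · simp only [hk, ite_false]
      congr 1
      exact Fin.ext (show 2*(k.1/2)+1 = k.1 by omega)
lemma div2_lt (i : ℕ) (j0 : Fin (2^(i+1))) : j0.1 / 2 < 2^i := by
  have h := j0.2; have h2 : 2^(i+1) = 2^i*2 := pow_succ 2 i; omega
lemma push (γ : ℕ → ℕ → BGate) (i : ℕ) (j0 : Fin (2^(i+1))) (f : ℤ → ℤ → ℝ) :
    genE γ (i+1) (fun x y => f (x j0) y)
      = genE γ i (fun z y =>
          condE (γ i (j0.1 / 2)) (j0.1 % 2)
            (z ⟨j0.1 / 2, div2_lt i j0⟩) f y) := by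
  set j' := (⟨j0.1 / 2, div2_lt i j0⟩ : Fin (2^i)) with hj'
  set g : BGate := γ i (j0.1 / 2) with hg
  unfold genE
  rw [Finset.sum_comm]
  rw [Finset.sum_comm (s := (univ : Finset (Fin (2^i) → Bool)))]
  refine Finset.sum_congr rfl fun b _ => ?_
  set y : ℤ := pm b with hy
  -- reindex the fine layer by pairs
  rw [← Equiv.sum_comp (pairUp i)
    (fun s => f (pm (s j0)) y * genMass γ (i+1) (fun k => pm (s k)) y)]
  set r := j0.1 % 2 with hr
  -- abbreviations
  set eb : Fin (2^i) → Bool × Bool → ℤ :=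
    fun j p => (γ i j).eval (pm p.1) (pm p.2) with heb
  set σ₀ : (Fin (2^i) → Bool × Bool) → Fin (2^i) → Bool :=
    fun t j => decide (eb j (t j) = 1) with hσ₀
  have hZ : ∀ t j, eb j (t j) = pm (σ₀ t j) := by
    intro t j
    show eb j (t j) = pm (decide (eb j (t j) = 1))
    rcases eval_pm (γ i j) (t j).1 (t j).2 with h | h <;>
      · have h' : eb j (t j) = _ := h
        rw [h']; norm_num [pm]
  have hprev : ∀ (t : Fin (2^i) → Bool × Bool),
      prevLayer i (γ i) (fun k => pm (pairUp i t k)) = fun j => pm (σ₀ t j) := by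
    intro t
    funext j
    rw [← hZ t j]
    unfold prevLayer
    show (γ i j).eval (pm (pairUp i t ⟨2*j.1, _⟩)) (pm (pairUp i t ⟨2*j.1+1, _⟩))
        = (γ i j).eval (pm (t j).1) (pm (t j).2)
    have e1 : pairUp i t ⟨2*j.1, by have h := j.2; rw [pow_succ]; omega⟩ = (t j).1 := by
      show (if (2*j.1) % 2 = 0 then _ else _) = _
      rw [if_pos (by omega)]
      have hidx : (2*j.1)/2 = j.1 := by omega
      simp only [hidx, Fin.eta]
    have e2 : pairUp i t ⟨2*j.1+1, by have h := j.2; rw [pow_succ]; omega⟩ = (t j).2 := by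
      show (if (2*j.1+1) % 2 = 0 then _ else _) = _
      rw [if_neg (by omega)]
      have hidx : (2*j.1+1)/2 = j.1 := by omega
      simp only [hidx, Fin.eta]
    rw [e1, e2]
  have hsel : ∀ t : Fin (2^i) → Bool × Bool,
      pairUp i t j0 = (if r = 0 then (t j').1 else (t j').2) :=
    fun t => rfl
  -- rewrite each fine-layer term as a sum over coarse configurations
  have hL : ∀ t : Fin (2^i) → Bool × Bool,
      f (pm (pairUp i t j0)) y * genMass γ (i+1) (fun k => pm (pairUp i t k)) y
        = ∑ σ : Fin (2^i) → Bool, if σ = σ₀ t then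
            f (pm (if r = 0 then (t j').1 else (t j').2)) y *
              (genMass γ i (fun j => pm (σ j)) y *
                ∏ j : Fin (2^i), (((γ i j).patCount (pm (σ j)) : ℝ))⁻¹)
          else 0 := by
    intro t
    rw [Finset.sum_ite_eq' univ (σ₀ t), if_pos (mem_univ _)]
    have hm : genMass γ (i+1) (fun k => pm (pairUp i t k)) y
        = genMass γ i (fun j => pm (σ₀ t j)) y *
            ∏ j : Fin (2^i), (((γ i j).patCount (pm (σ₀ t j)) : ℝ))⁻¹ := by
      show (if _ then _ else _) = _
      rw [if_pos (fun j => pm_one_or _)]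
      rw [hprev t]
    rw [hm, hsel t]
  simp only [hL]
  rw [Finset.sum_comm]
  refine Finset.sum_congr rfl fun σ _ => ?_
  set M := genMass γ i (fun j => pm (σ j)) y with hM
  set G : Fin (2^i) → Bool × Bool → ℝ := fun j p =>
    (if eb j p = pm (σ j) then (((γ i j).patCount (pm (σ j)) : ℝ))⁻¹ else 0) *
    (if j = j' then f (pm (if r = 0 then p.1 else p.2)) y else 1) with hG
  have hstep : ∀ t : Fin (2^i) → Bool × Bool,
      (if σ = σ₀ t then
          f (pm (if r = 0 then (t j').1 else (t j').2)) y *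
            (M * ∏ j : Fin (2^i), (((γ i j).patCount (pm (σ j)) : ℝ))⁻¹)
        else 0)
      = M * ∏ j : Fin (2^i), G j (t j) := by
    intro t
    rcases eq_or_ne σ (σ₀ t) with h | h
    · rw [if_pos h]
      have hprod : ∏ j : Fin (2^i), G j (t j)
          = (∏ j : Fin (2^i), (((γ i j).patCount (pm (σ j)) : ℝ))⁻¹) *
            (f (pm (if r = 0 then (t j').1 else (t j').2)) y) := by
        rw [hG]
        rw [Finset.prod_mul_distrib]
        congr 1
        · refine Finset.prod_congr rfl fun j _ => ?_
          rw [if_pos]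
          rw [hZ t j, h]
        · rw [Finset.prod_ite_eq' univ j'
            (fun j => f (pm (if r = 0 then (t j).1 else (t j).2)) y), if_pos (mem_univ _)]
      rw [hprod]; ring
    · rw [if_neg h]
      obtain ⟨j, hj⟩ := Function.ne_iff.1 h
      have hzero : G j (t j) = 0 := by
        rw [hG]
        show (if eb j (t j) = pm (σ j) then _ else 0) * _ = 0
        rw [if_neg, zero_mul]
        rw [hZ t j]
        exact fun hc => hj (pm_inj hc).symm
      rw [Finset.prod_eq_zero (mem_univ j) hzero, mul_zero]
  have hother : ∀ j : Fin (2^i), j ≠ j' → ∑ p : Bool × Bool, G j p = 1 := by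
    intro j hne
    have h1 : ∀ p : Bool × Bool, G j p =
        (if eb j p = pm (σ j) then (((γ i j).patCount (pm (σ j)) : ℝ))⁻¹ else 0) := by
      intro p
      show _ * (if j = j' then _ else _) = _
      rw [if_neg hne, mul_one]
    rw [Finset.sum_congr rfl fun p _ => h1 p]
    rw [← Finset.sum_filter, Finset.sum_const]
    have hcard : (univ.filter fun p : Bool × Bool => eb j p = pm (σ j)).card
        = (γ i j.1).patCount (pm (σ j)) := rfl
    rw [hcard, nsmul_eq_mul]
    exact mul_inv_cancel₀ (Nat.cast_ne_zero.2 (patCount_pos _ _).ne')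
  have hmain : ∑ p : Bool × Bool, G j' p = condE g r (pm (σ j')) f y := by
    unfold condE
    rw [Finset.mul_sum]
    refine Finset.sum_congr rfl fun p _ => ?_
    show (if g.eval (pm p.1) (pm p.2) = pm (σ j') then ((g.patCount (pm (σ j')) : ℝ))⁻¹ else 0) *
        (if j' = j' then f (pm (if r = 0 then p.1 else p.2)) y else 1)
      = (g.patCount (pm (σ j')) : ℝ)⁻¹ *
        (if g.eval (pm p.1) (pm p.2) = pm (σ j') then f (pm (if r = 0 then p.1 else p.2)) y else 0)
    rw [if_pos rfl]
    split_ifs with h <;> ring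
  rw [Finset.sum_congr rfl fun t _ => hstep t]
  rw [← Finset.mul_sum, ← Fintype.piFinset_univ, ← Finset.prod_univ_sum,
      Finset.prod_eq_single j' (fun j _ h => hother j h) (fun h => absurd (mem_univ j') h),
      hmain, mul_comm]
noncomputable def coefA : BGate → ℝ | .and => 1/3 | .or => -1/3 | .nand => 1/3 | .nor => -1/3
noncomputable def coefB : BGate → ℝ | .and => 2/3 | .or => 2/3 | .nand => -2/3 | .nor => -2/3
lemma cardA : #(filter (fun p : Bool × Bool => p.1 = true ∧ p.2 = true) univ) = 1 := by decide
lemma cardB : #(filter (fun p : Bool × Bool => p.1 = true → p.2 = false) univ) = 3 := by decide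
lemma cardC : #(filter (fun p : Bool × Bool => p.1 = false ∧ p.2 = false) univ) = 1 := by decide
lemma cardD : #(filter (fun p : Bool × Bool => p.1 = false → p.2 = true) univ) = 3 := by decide
lemma abs_coefB (g : BGate) : |coefB g| = 2/3 := by
  cases g <;> simp [coefB] <;> norm_num
lemma condE_one (g : BGate) (r : ℕ) (b : Bool) (y : ℤ) :
    condE g r (pm b) (fun _ _ => (1:ℝ)) y = 1 := by
  cases g <;> cases b <;>
    simp [condE, BGate.eval, BGate.patCount, pm, Fintype.sum_prod_type] <;> norm_num [cardA, cardB, cardC, cardD]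
lemma condE_y (g : BGate) (r : ℕ) (b : Bool) (y : ℤ) :
    condE g r (pm b) (fun _ y => (y:ℝ)) y = (y:ℝ) := by
  cases g <;> cases b <;>
    simp [condE, BGate.eval, BGate.patCount, pm, Fintype.sum_prod_type] <;>
    norm_num [cardA, cardB, cardC, cardD] <;> ring
lemma condE_mul (g : BGate) (r : ℕ) (b : Bool) (y : ℤ) :
    condE g r (pm b) (fun a y => (a:ℝ)*(y:ℝ)) y
      = coefA g * (y:ℝ) + coefB g * (((pm b : ℤ):ℝ) * (y:ℝ)) := by
  by_cases hr : r = 0 <;> cases g <;> cases b <;>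
    simp [condE, BGate.eval, BGate.patCount, pm, hr, coefA, coefB, Fintype.sum_prod_type] <;>
    norm_num [cardA, cardB, cardC, cardD] <;> ring
lemma genE_congr (γ : ℕ → ℕ → BGate) (i : ℕ) (f f' : (Fin (2^i) → ℤ) → ℤ → ℝ)
    (h : ∀ (s : Fin (2^i) → Bool) (b : Bool),
      f (fun j => pm (s j)) (pm b) = f' (fun j => pm (s j)) (pm b)) :
    genE γ i f = genE γ i f' :=
  Finset.sum_congr rfl fun s _ => Finset.sum_congr rfl fun b _ => by rw [h]
lemma genE_add_smul (γ : ℕ → ℕ → BGate) (i : ℕ) (a c : ℝ)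
    (f1 f2 : (Fin (2^i) → ℤ) → ℤ → ℝ) :
    genE γ i (fun x y => a * f1 x y + c * f2 x y) = a * genE γ i f1 + c * genE γ i f2 := by
  unfold genE
  rw [Finset.mul_sum, Finset.mul_sum, ← Finset.sum_add_distrib]
  refine Finset.sum_congr rfl fun s _ => ?_
  rw [Finset.mul_sum, Finset.mul_sum, ← Finset.sum_add_distrib]
  refine Finset.sum_congr rfl fun b _ => ?_
  ring
lemma genE_zero (γ : ℕ → ℕ → BGate) (f : (Fin (2^0) → ℤ) → ℤ → ℝ) :
    genE γ 0 f = f (fun _ => 1) 1 * (1/2) + f (fun _ => -1) (-1) * (1/2) := by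
  unfold genE
  haveI : Unique (Fin (2^0)) := ⟨⟨⟨0, by norm_num⟩⟩, fun a => Fin.ext (by omega)⟩
  rw [← Equiv.sum_comp (Equiv.funUnique (Fin (2^0)) Bool).symm
    (fun s => ∑ b : Bool, f (fun j => pm (s j)) (pm b) * genMass γ 0 (fun j => pm (s j)) (pm b))]
  have hm : ∀ c b : Bool, genMass γ 0 (fun _ => pm c) (pm b) = if c = b then 1/2 else 0 := by
    intro c b
    show (if pm c = pm b ∧ (pm b = 1 ∨ pm b = -1) then (1:ℝ)/2 else 0) = _
    cases c <;> cases b <;> norm_num [pm]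
  simp only [Equiv.funUnique_symm_apply]
  have hueq : ∀ c : Bool, (fun j : Fin (2^0) => pm (uniqueElim (α := fun _ => Bool) c j)) = fun _ => pm c :=
    fun c => funext fun j => by rw [uniqueElim_const]
  rw [Fintype.sum_bool, Fintype.sum_bool, Fintype.sum_bool]
  simp only [hueq]
  rw [hm, hm, hm, hm]
  norm_num [pm]
lemma layers (γ : ℕ → ℕ → BGate) (i : ℕ) :
    genE γ i (fun _ _ => (1:ℝ)) = 1 ∧ genE γ i (fun _ y => (y:ℝ)) = 0 ∧
      ∀ j : Fin (2^i), |genE γ i (fun x y => ((x j : ℤ):ℝ) * ((y:ℤ):ℝ))| = (2/3:ℝ)^i := by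
  induction i with
  | zero =>
      refine ⟨?_, ?_, fun j => ?_⟩
      · rw [genE_zero]; norm_num
      · rw [genE_zero]; norm_num
      · rw [genE_zero]; norm_num
  | succ i ih =>
      obtain ⟨hT, hEy, hC⟩ := ih
      have hone : genE γ (i+1) (fun _ _ => (1:ℝ)) = 1 := by
        have h := push γ i ⟨0, Nat.pow_pos (by norm_num)⟩ (fun _ _ => (1:ℝ))
        rw [h]
        rw [genE_congr γ i _ (fun _ _ => (1:ℝ)) (fun s b => condE_one _ _ _ _)]
        exact hT
      have hy : genE γ (i+1) (fun _ y => (y:ℝ)) = 0 := by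
        have h := push γ i ⟨0, Nat.pow_pos (by norm_num)⟩ (fun _ y => (y:ℝ))
        rw [h]
        rw [genE_congr γ i _ (fun _ y => (y:ℝ)) (fun s b => condE_y _ _ _ _)]
        exact hEy
      refine ⟨hone, hy, fun j => ?_⟩
      have h := push γ i j (fun a y => (a:ℝ)*(y:ℝ))
      rw [h]
      set jc : Fin (2^i) := ⟨j.1 / 2, div2_lt i j⟩ with hjc
      set g : BGate := γ i (j.1 / 2) with hg
      have hcong : genE γ i (fun z y => condE g (j.1 % 2) (z jc) (fun a y => (a:ℝ)*(y:ℝ)) y)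
          = genE γ i (fun z y => coefA g * (y:ℝ) + coefB g * (((z jc : ℤ):ℝ) * ((y:ℤ):ℝ))) :=
        genE_congr γ i _ _ (fun s b => condE_mul g (j.1 % 2) (s jc) (pm b))
      rw [hcong, genE_add_smul γ i (coefA g) (coefB g)
        (fun _ y => (y:ℝ)) (fun z y => ((z jc : ℤ):ℝ) * ((y:ℤ):ℝ))]
      rw [hEy, mul_zero, zero_add, abs_mul, abs_coefB, hC jc]
      rw [← pow_succ']
lemma pr_add (γ : ℕ → ℕ → BGate) (i : ℕ) :
    genPr γ i (fun _ y => y = 1) + genPr γ i (fun _ y => y = -1)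
      = genE γ i (fun _ _ => (1:ℝ)) := by
  unfold genPr genE
  rw [← Finset.sum_add_distrib]
  refine Finset.sum_congr rfl fun s _ => ?_
  rw [← Finset.sum_add_distrib]
  refine Finset.sum_congr rfl fun b _ => ?_
  cases b <;> norm_num [pm]
lemma pr_sub (γ : ℕ → ℕ → BGate) (i : ℕ) :
    genPr γ i (fun _ y => y = 1) - genPr γ i (fun _ y => y = -1)
      = genE γ i (fun _ y => (y:ℝ)) := by
  unfold genPr genE
  rw [← Finset.sum_sub_distrib]
  refine Finset.sum_congr rfl fun s _ => ?_
  rw [← Finset.sum_sub_distrib]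
  refine Finset.sum_congr rfl fun b _ => ?_
  cases b <;> norm_num [pm]
lemma E_split (γ : ℕ → ℕ → BGate) (i : ℕ) (j : Fin (2^i)) :
    genE γ i (fun x y => (x j : ℝ) * (y : ℝ))
      = 2 * genPr γ i (fun x y => x j = 1 ∧ y = 1)
        - 2 * genPr γ i (fun x y => x j = 1 ∧ y = -1)
        + genPr γ i (fun _ y => y = -1) - genPr γ i (fun _ y => y = 1) := by
  unfold genPr genE
  rw [Finset.mul_sum, Finset.mul_sum, ← Finset.sum_sub_distrib, ← Finset.sum_add_distrib,
    ← Finset.sum_sub_distrib]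
  refine Finset.sum_congr rfl fun s _ => ?_
  rw [Finset.mul_sum, Finset.mul_sum, ← Finset.sum_sub_distrib, ← Finset.sum_add_distrib,
    ← Finset.sum_sub_distrib]
  refine Finset.sum_congr rfl fun b _ => ?_
  cases hsj : s j <;> cases b <;> norm_num [pm, hsj] <;> ring

/-- under `D^(i)` (layer `i ≤ d` of a circuit of depth `d`, `n = 2^d`),
for every coordinate `j`: `|E[x_j y]| = |P(x_j=1|y=1) − P(x_j=1|y=−1)| = (2/3)^i`,
and in particular `|E[x_j y]| − E[y] ≥ (2/3)^d = n^{log₂(2/3)}`. -/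
theorem stmt7 (γ : ℕ → ℕ → BGate) (d i : ℕ) (hid : i ≤ d) (n : ℕ) (hn : n = 2^d)
    (j : Fin (2^i)) :
    |genE γ i (fun x y => (x j : ℝ) * (y : ℝ))| =
      |genPr γ i (fun x y => x j = 1 ∧ y = 1) / genPr γ i (fun _ y => y = 1) -
       genPr γ i (fun x y => x j = 1 ∧ y = -1) / genPr γ i (fun _ y => y = -1)| ∧
    |genE γ i (fun x y => (x j : ℝ) * (y : ℝ))| = (2/3 : ℝ)^i ∧
    |genE γ i (fun x y => (x j : ℝ) * (y : ℝ))| - genE γ i (fun _ y => (y : ℝ))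
      ≥ (2/3 : ℝ)^d ∧
    (2/3 : ℝ)^d = (n : ℝ) ^ (Real.logb 2 (2/3)) := by
  subst hn
  obtain ⟨hT, hEy, hC⟩ := layers γ i
  have hP1 : genPr γ i (fun _ y => y = 1) = 1/2 := by
    have h1 := pr_add γ i
    have h2 := pr_sub γ i
    rw [hT] at h1
    rw [hEy] at h2
    linarith
  have hPm : genPr γ i (fun _ y => y = -1) = 1/2 := by
    have h1 := pr_add γ i
    rw [hT] at h1
    linarith
  have hCj := hC j
  have h2 : (2:ℝ) ^ Real.logb 2 (2/3) = 2/3 :=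
    Real.rpow_logb (by norm_num) (by norm_num) (by norm_num)
  refine ⟨?_, hCj, ?_, ?_⟩
  · rw [E_split γ i j, hP1, hPm]
    congr 1
    field_simp
    ring
  · rw [hCj, hEy, sub_zero]
    exact pow_le_pow_of_le_one (by norm_num) (by norm_num) hid
  · have hcast : ((2^d : ℕ) : ℝ) = (2:ℝ) ^ (d:ℕ) := by push_cast; ring
    rw [hcast, ← Real.rpow_natCast (2:ℝ) d, ← Real.rpow_mul (by norm_num : (0:ℝ) ≤ 2),
      mul_comm, Real.rpow_mul (by norm_num : (0:ℝ) ≤ 2), h2, Real.rpow_natCast]
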